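/- In the Klein bottle group with automorphism φ : x ↦ x, y ↦ x^r y^{-1}, the twisted conjugacy class of x^i consists exactly of the elements x^i y^{4n} and x^{-r-i} y^{4n+2} for n ∈ ℤ; consequently x^i and x^j are φ-twisted conjugate iff i = j, and R(φ) = ∞. -/

import Mathlib

/-- Two elements are `φ`-twisted conjugate if `b = σ * a * (φ σ)⁻¹` for some `σ`. -/
def twistedConj {G : Type*} [Group G] (φ : G →* G) (a b : G) : Prop :=
  ∃ σ : G, b = σ * a * (φ σ)⁻¹


/-- The single relator of the Klein bottle group. -/
def kleinRels : Set (FreeGroup (Fin 2)) :=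
  {FreeGroup.of 0 * FreeGroup.of 1 * FreeGroup.of 0 * (FreeGroup.of 1)⁻¹}

/-- The Klein bottle group `⟨a, b | a b a b⁻¹⟩`. -/
abbrev KleinGroup := PresentedGroup kleinRels

/-- The generator `a` (also called `x` or `α`). -/
def ka : KleinGroup := PresentedGroup.of 0

/-- The generator `b` (also called `y` or `β`). -/
def kb : KleinGroup := PresentedGroup.of 1

lemma krel : ka * kb * ka * kb⁻¹ = 1 := by
  have h : (FreeGroup.of 0 * FreeGroup.of 1 * FreeGroup.of 0 * (FreeGroup.of 1)⁻¹ : FreeGroup (Fin 2)) ∈ Subgroup.normalClosure kleinRels :=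
    Subgroup.subset_normalClosure rfl
  have := (QuotientGroup.eq_one_iff _).2 h
  exact this

-- model
abbrev MZ := Multiplicative ℤ
def negAut : MulAut MZ := MulEquiv.inv MZ
def kAct : MZ →* MulAut MZ := zpowersHom _ negAut
abbrev KModel := SemidirectProduct MZ MZ kAct

def F : KleinGroup →* KModel :=
  PresentedGroup.toGroup (f := fun i => if i = 0 then SemidirectProduct.inl (Multiplicative.ofAdd 1) else SemidirectProduct.inr (Multiplicative.ofAdd 1)) (by
    intro rel hrel
    rw [Set.mem_singleton_iff.1 hrel]
    simp [map_mul, map_inv]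
    decide)

lemma F_ka : F ka = SemidirectProduct.inl (Multiplicative.ofAdd 1) := by
  simp [F, ka]
lemma F_kb : F kb = SemidirectProduct.inr (Multiplicative.ofAdd 1) := by
  simp [F, kb]

lemma ofAdd_pow (m : ℤ) : (Multiplicative.ofAdd (1:ℤ)) ^ m = Multiplicative.ofAdd m := by
  rw [← ofAdd_zsmul]; simp

lemma F_normal (m k : ℤ) : F (ka ^ m * kb ^ k) =
    ⟨Multiplicative.ofAdd m, Multiplicative.ofAdd k⟩ := by
  rw [map_mul, map_zpow, map_zpow, F_ka, F_kb,
    ← map_zpow SemidirectProduct.inl, ← map_zpow SemidirectProduct.inr,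
    ofAdd_pow, ofAdd_pow, ← SemidirectProduct.mk_eq_inl_mul_inr]

lemma normal_inj {m k m' k' : ℤ} (h : ka ^ m * kb ^ k = ka ^ m' * kb ^ k') :
    m = m' ∧ k = k' := by
  have h2 := congrArg F h
  rw [F_normal, F_normal] at h2
  injection h2 with h3 h4
  exact ⟨by simpa using congrArg Multiplicative.toAdd h3,
    by simpa using congrArg Multiplicative.toAdd h4⟩

lemma swap_ab : kb * ka = ka⁻¹ * kb := by
  have h : ka * kb * ka = kb := by
    have := krel
    rw [mul_inv_eq_one] at this; exact this
  calc kb * ka = ka⁻¹ * (ka * kb * ka) := by group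
  _ = ka⁻¹ * kb := by rw [h]

lemma swap_conj : kb * ka * kb⁻¹ = ka⁻¹ := by
  rw [swap_ab]; group

lemma swap_m (m : ℤ) : kb * ka ^ m = ka ^ (-m) * kb := by
  have h1 : kb * ka ^ m * kb⁻¹ = ka ^ (-m) := by
    have h := map_zpow (MulAut.conj kb) ka m
    simp only [MulAut.conj_apply] at h
    rw [h, swap_conj]; group
  rw [← h1]; group

lemma swap_m' (m : ℤ) : kb⁻¹ * ka ^ m = ka ^ (-m) * kb⁻¹ := by
  have h : kb * ka ^ (-m) = ka ^ m * kb := by simpa using swap_m (-m)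
  calc kb⁻¹ * ka ^ m = kb⁻¹ * (ka ^ m * kb) * kb⁻¹ := by group
  _ = kb⁻¹ * (kb * ka ^ (-m)) * kb⁻¹ := by rw [h]
  _ = ka ^ (-m) * kb⁻¹ := by group

noncomputable def e (k : ℤ) : ℤ := if Even k then 1 else -1

lemma e_succ (k : ℤ) : e (k + 1) = - e k := by
  by_cases h : Even k <;> simp [e, Int.even_add_one, h]

lemma e_pred (k : ℤ) : e (k - 1) = - e k := by
  have := e_succ (k - 1); simp at this; omega

lemma e_even {k : ℤ} (h : Even k) : e k = 1 := if_pos h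
lemma e_odd {k : ℤ} (h : ¬ Even k) : e k = -1 := if_neg h
lemma e_two_mul (k : ℤ) : e (2 * k) = 1 := e_even ⟨k, by ring⟩

lemma swap_pow (k : ℤ) : ∀ m, kb ^ k * ka ^ m = ka ^ (e k * m) * kb ^ k := by
  induction k using Int.induction_on with
  | zero => intro m; simp [e]
  | succ k ih =>
    intro m
    have h1 : kb ^ ((k : ℤ) + 1) * ka ^ m = kb ^ (k : ℤ) * (kb * ka ^ m) := by group
    rw [h1, swap_m, ← mul_assoc, ih, e_succ]
    group
  | pred k ih =>
    intro m
    have h1 : kb ^ (-(k : ℤ) - 1) * ka ^ m = kb ^ (-(k : ℤ)) * (kb⁻¹ * ka ^ m) := by group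
    rw [h1, swap_m', ← mul_assoc, ih, e_pred]
    group

lemma e_sq (k : ℤ) : e k * e k = 1 := by by_cases h : Even k <;> simp [e, h]

lemma normal_form (g : KleinGroup) : ∃ m k : ℤ, g = ka ^ m * kb ^ k := by
  have hg : g ∈ Subgroup.closure (Set.range (PresentedGroup.of : Fin 2 → KleinGroup)) := by
    rw [PresentedGroup.closure_range_of]; trivial
  induction hg using Subgroup.closure_induction with
  | mem x hx =>
    obtain ⟨j, rfl⟩ := hx
    fin_cases j
    · exact ⟨1, 0, by simp [ka]⟩
    · exact ⟨0, 1, by simp [kb]⟩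
  | one => exact ⟨0, 0, by simp⟩
  | mul x y _ _ ihx ihy =>
    obtain ⟨m, k, rfl⟩ := ihx
    obtain ⟨m', k', rfl⟩ := ihy
    refine ⟨m + e k * m', k + k', ?_⟩
    have h1 : ka ^ m * kb ^ k * (ka ^ m' * kb ^ k')
        = ka ^ m * (kb ^ k * ka ^ m') * kb ^ k' := by group
    rw [h1, swap_pow]; group
  | inv x _ ihx =>
    obtain ⟨m, k, rfl⟩ := ihx
    refine ⟨e (-k) * (-m), -k, ?_⟩
    rw [← swap_pow]; group

noncomputable def c (r k : ℤ) : ℤ := if Even k then 0 else r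

lemma c_succ (r k : ℤ) : c r k + e k * r = c r (k + 1) := by
  by_cases h : Even k <;> simp [c, e, Int.even_add_one, h] <;> ring

lemma c_pred (r k : ℤ) : c r k + e k * r = c r (k - 1) := by
  have h1 := c_succ r k
  have h2 : c r (k + 1) = c r (k - 1) := by
    have : Even (k + 1) ↔ Even (k - 1) := by
      exact ⟨fun ⟨t, ht⟩ => ⟨t - 1, by omega⟩, fun ⟨t, ht⟩ => ⟨t + 1, by omega⟩⟩
    by_cases h : Even (k + 1)
    · rw [c, c, if_pos h, if_pos (this.1 h)]
    · rw [c, c, if_neg h, if_neg (fun hc => h (this.2 hc))]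
  rw [h1, h2]

lemma phib_pow (r : ℤ) : ∀ k : ℤ, (ka ^ r * kb⁻¹) ^ k = ka ^ (c r k) * kb ^ (-k) := by
  have base : ka ^ r * kb⁻¹ = ka ^ (c r 1) * kb ^ (-1 : ℤ) := by
    simp [c]
  have inv1 : (ka ^ r * kb⁻¹)⁻¹ = ka ^ r * kb := by
    have : kb * ka ^ (-r) = ka ^ r * kb := by simpa using swap_m (-r)
    rw [← this]; group
  intro k
  induction k using Int.induction_on with
  | zero => simp [c]
  | succ k ih =>
    rw [zpow_add_one, ih, base]
    have h1 : ka ^ c r ↑k * kb ^ (-(k:ℤ)) * (ka ^ c r 1 * kb ^ (-1:ℤ))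
        = ka ^ c r ↑k * (kb ^ (-(k:ℤ)) * ka ^ c r 1) * kb ^ (-1:ℤ) := by group
    rw [h1, swap_pow, ← c_succ r k]
    have he : e (-(k:ℤ)) = e (k:ℤ) := by
      by_cases h : Even (k:ℤ) <;> simp [e, h, even_neg]
    rw [he]
    by_cases h : Even (k:ℤ)
    · simp [c, e, h, Int.even_add_one] <;> group
    · simp [c, e, h, Int.even_add_one] <;> group
  | pred k ih =>
    rw [zpow_sub_one, ih, inv1]
    have h1 : ka ^ c r (-(k:ℤ)) * kb ^ (-(-(k:ℤ))) * (ka ^ r * kb)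
        = ka ^ c r (-(k:ℤ)) * (kb ^ ((k:ℤ)) * ka ^ r) * kb := by group
    rw [h1, swap_pow]
    have he : e ((k:ℤ)) = e (-(k:ℤ)) := by
      by_cases h : Even (k:ℤ) <;> simp [e, h, even_neg]
    rw [he, ← c_pred r (-(k:ℤ))]
    group

section Main
variable (r : ℤ) (φ : MulAut KleinGroup) (hx : φ ka = ka) (hy : φ kb = ka ^ r * kb⁻¹)

include hx hy in
lemma phi_normal (m k : ℤ) : φ (ka ^ m * kb ^ k) = ka ^ (m + c r k) * kb ^ (-k) := by
  rw [map_mul, map_zpow, map_zpow, hx, hy, phib_pow]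
  group

include hx hy in
lemma tc_formula (m k i : ℤ) :
    (ka ^ m * kb ^ k) * ka ^ i * (φ (ka ^ m * kb ^ k))⁻¹
      = ka ^ (e k * i - c r k) * kb ^ (2 * k) := by
  rw [phi_normal r φ hx hy]
  have h1 : ka ^ m * kb ^ k * ka ^ i * (ka ^ (m + c r k) * kb ^ (-k))⁻¹
      = ka ^ m * (kb ^ k * ka ^ i) * (kb ^ k * ka ^ (-(m + c r k))) := by group
  rw [h1, swap_pow, swap_pow]
  have h2 : ka ^ m * (ka ^ (e k * i) * kb ^ k) * (ka ^ (e k * -(m + c r k)) * kb ^ k)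
      = ka ^ m * ka ^ (e k * i) * (kb ^ k * ka ^ (e k * -(m + c r k))) * kb ^ k := by group
  rw [h2, swap_pow]
  have h3 : e k * (e k * -(m + c r k)) = -(m + c r k) := by
    rw [← mul_assoc, e_sq]; ring
  rw [h3]
  group

end Main


lemma tc_equiv {G : Type*} [Group G] (φ : MulAut G) :
    Equivalence (twistedConj φ.toMonoidHom) := by
  constructor
  · exact fun a => ⟨1, by simp⟩
  · rintro a b ⟨σ, rfl⟩
    exact ⟨σ⁻¹, by simp [map_inv]; group⟩
  · rintro a b c ⟨σ, rfl⟩ ⟨τ, rfl⟩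
    exact ⟨τ * σ, by simp [map_mul]; group⟩

/-- For the automorphism `x ↦ x`, `y ↦ x^r y⁻¹` of the Klein bottle group, the
twisted conjugacy class of `x^i` consists exactly of the elements `x^i y^{4n}` and
`x^{-r-i} y^{4n+2}`; hence `x^i ∼ x^j` iff `i = j`, and `R(φ) = ∞`. -/
theorem stmt10 (r : ℤ) (φ : MulAut KleinGroup)
    (hx : φ ka = ka) (hy : φ kb = ka ^ r * kb⁻¹) :
    (∀ i : ℤ, {g : KleinGroup | twistedConj φ.toMonoidHom (ka ^ i) g} =
      {g : KleinGroup | ∃ n : ℤ,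
        g = ka ^ i * kb ^ (4 * n) ∨ g = ka ^ (-r - i) * kb ^ (4 * n + 2)}) ∧
    (∀ i j : ℤ, twistedConj φ.toMonoidHom (ka ^ i) (ka ^ j) ↔ i = j) ∧
    Infinite (Quot (twistedConj φ.toMonoidHom)) := by
  have hclass : ∀ i : ℤ, {g : KleinGroup | twistedConj φ.toMonoidHom (ka ^ i) g} =
      {g : KleinGroup | ∃ n : ℤ,
        g = ka ^ i * kb ^ (4 * n) ∨ g = ka ^ (-r - i) * kb ^ (4 * n + 2)} := by
    intro i
    ext g
    simp only [Set.mem_setOf_eq, twistedConj, MulEquiv.coe_toMonoidHom]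
    constructor
    · rintro ⟨σ, rfl⟩
      obtain ⟨m, k, rfl⟩ := normal_form σ
      rw [tc_formula r φ hx hy m k i]
      rcases Int.even_or_odd k with ⟨n, hn⟩ | ⟨n, hn⟩
      · refine ⟨n, Or.inl ?_⟩
        rw [e_even ⟨n, hn⟩, show c r k = 0 from if_pos ⟨n, hn⟩]
        have h1 : 1 * i - 0 = i := by ring
        have h2 : 2 * k = 4 * n := by omega
        rw [h1, h2]
      · refine ⟨n, Or.inr ?_⟩
        have hne : ¬ Even k := by
          rw [← Int.not_odd_iff_even]; simp; exact ⟨n, hn⟩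
        rw [e_odd hne, show c r k = r from if_neg hne]
        have h1 : -1 * i - r = -r - i := by ring
        have h2 : 2 * k = 4 * n + 2 := by omega
        rw [h1, h2]
    · rintro ⟨n, h | h⟩
      · refine ⟨ka ^ (0:ℤ) * kb ^ (2 * n), ?_⟩
        rw [tc_formula r φ hx hy 0 (2*n) i, h]
        rw [e_two_mul, show c r (2*n) = 0 from if_pos ⟨n, by ring⟩]
        have h1 : 1 * i - 0 = i := by ring
        have h2 : 2 * (2 * n) = 4 * n := by ring
        rw [h1, h2]
      · refine ⟨ka ^ (0:ℤ) * kb ^ (2 * n + 1), ?_⟩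
        rw [tc_formula r φ hx hy 0 (2*n+1) i, h]
        have hne : ¬ Even (2*n+1) := fun ⟨t, ht⟩ => by omega
        rw [e_odd hne, show c r (2*n+1) = r from if_neg hne]
        have h1 : -1 * i - r = -r - i := by ring
        have h2 : 2 * (2 * n + 1) = 4 * n + 2 := by ring
        rw [h1, h2]
  have hij : ∀ i j : ℤ, twistedConj φ.toMonoidHom (ka ^ i) (ka ^ j) ↔ i = j := by
    intro i j
    constructor
    · intro htc
      have hmem : ka ^ j ∈ {g : KleinGroup | ∃ n : ℤ,
          g = ka ^ i * kb ^ (4 * n) ∨ g = ka ^ (-r - i) * kb ^ (4 * n + 2)} :=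
        hclass i ▸ htc
      obtain ⟨n, h | h⟩ := hmem
      · have h' : ka ^ j * kb ^ (0:ℤ) = ka ^ i * kb ^ (4*n) := by simpa using h
        obtain ⟨h1, h2⟩ := normal_inj h'
        omega
      · have h' : ka ^ j * kb ^ (0:ℤ) = ka ^ (-r-i) * kb ^ (4*n+2) := by simpa using h
        obtain ⟨h1, h2⟩ := normal_inj h'
        omega
    · rintro rfl; exact ⟨1, by simp⟩
  refine ⟨hclass, hij, ?_⟩
  apply Infinite.of_injective (fun i : ℤ => Quot.mk (twistedConj φ.toMonoidHom) (ka ^ i))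
  intro i j h
  have h2 := Quot.eqvGen_exact h
  exact (hij i j).1 ((tc_equiv φ).eqvGen_iff.1 h2)
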